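/- Fix κ > 1, β with 0 < β < 1/2, and δ > 0. Then there exist η > 0 and n₀ ∈ ℕ, depending only on κ, β, δ, with the following property. Let (Ω, P) be a probability space, let (B_n)_{n≥1} be an i.i.d. sequence of {0,1}-valued random variables with P(B_n = 0) = P(B_n = 1) = 1/2, and let (Z_n)_{n≥0} be a sequence of measurable random variables with values in [0,1] such that, almost surely, Z₀ ≤ η and for every n ≥ 0: Z_{n+1} ≤ κ·Z_n² when B_{n+1} = 0, and Z_{n+1} ≤ κ·Z_n when B_{n+1} = 1. Then P( Z_n ≤ 2^{−2^{nβ}} for all n ≥ n₀ ) ≥ 1 − δ. -/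

import Mathlib

open MeasureTheory ProbabilityTheory
open scoped ENNReal NNReal

private def uSeq (b : ℕ → ℕ) (K : ℝ) : ℕ → ℝ
  | 0 => K
  | n+1 => if b n = 0 then 2 * uSeq b K n else uSeq b K n - 1

private def zc (b : ℕ → ℕ) (n : ℕ) : ℕ := ((Finset.range n).filter fun i => b i = 0).card

private lemma zc_succ (b : ℕ → ℕ) (n : ℕ) :
    zc b (n+1) = zc b n + (if b n = 0 then 1 else 0) := by
  unfold zc
  rw [Finset.range_add_one, Finset.filter_insert]
  split
  · rw [Finset.card_insert_of_notMem (by simp)]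
  · simp

private lemma uSeq_succ (b : ℕ → ℕ) (K : ℝ) (n : ℕ) :
    uSeq b K (n+1) = if b n = 0 then 2 * uSeq b K n else uSeq b K n - 1 := rfl

private lemma aux_Z_le (κ : ℝ) (hκ : 1 < κ) (b : ℕ → ℕ) (Z : ℕ → ℝ) (K : ℝ)
    (hZ0 : ∀ n, 0 ≤ Z n) (h0 : Z 0 ≤ κ ^ (-(K+1)))
    (hstep : ∀ n, (b n = 0 → Z (n+1) ≤ κ * Z n ^ 2) ∧ (b n = 1 → Z (n+1) ≤ κ * Z n))
    (hb : ∀ n, b n = 0 ∨ b n = 1) :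
    ∀ n, Z n ≤ κ ^ (-(uSeq b K n + 1)) := by
  have hκ0 : (0:ℝ) < κ := lt_trans one_pos hκ
  intro n
  induction n with
  | zero => exact h0
  | succ n ih =>
    rcases hb n with h | h
    · have h1 : Z (n+1) ≤ κ * Z n ^ 2 := (hstep n).1 h
      have h2 : Z n ^ 2 ≤ (κ ^ (-(uSeq b K n + 1))) ^ 2 :=
        pow_le_pow_left₀ (hZ0 n) ih 2
      have h3 : (κ ^ (-(uSeq b K n + 1))) ^ 2 = κ ^ ((-(uSeq b K n + 1)) * 2) := by
        rw [← Real.rpow_natCast (κ ^ (-(uSeq b K n + 1))) 2, ← Real.rpow_mul hκ0.le]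
        norm_num
      calc Z (n+1) ≤ κ * Z n ^ 2 := h1
        _ ≤ κ * (κ ^ (-(uSeq b K n + 1))) ^ 2 := by
            exact mul_le_mul_of_nonneg_left h2 hκ0.le
        _ = κ ^ (1:ℝ) * κ ^ ((-(uSeq b K n + 1)) * 2) := by rw [h3, Real.rpow_one]
        _ = κ ^ (1 + (-(uSeq b K n + 1)) * 2) := (Real.rpow_add hκ0 _ _).symm
        _ = κ ^ (-(uSeq b K (n+1) + 1)) := by
            rw [uSeq_succ, if_pos h]; congr 1; ring
    · have h1 : Z (n+1) ≤ κ * Z n := (hstep n).2 h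
      calc Z (n+1) ≤ κ * Z n := h1
        _ ≤ κ * κ ^ (-(uSeq b K n + 1)) := mul_le_mul_of_nonneg_left ih hκ0.le
        _ = κ ^ (1:ℝ) * κ ^ (-(uSeq b K n + 1)) := by rw [Real.rpow_one]
        _ = κ ^ (1 + (-(uSeq b K n + 1))) := (Real.rpow_add hκ0 _ _).symm
        _ = κ ^ (-(uSeq b K (n+1) + 1)) := by
            rw [uSeq_succ, if_neg (by omega)]; congr 1; ring

private lemma aux_u_ge (b : ℕ → ℕ) (K : ℝ) :
    ∀ n, (2:ℝ)^((zc b n : ℝ)) *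
        (K - ∑ j ∈ Finset.range n, (2:ℝ)^(-(zc b j : ℝ))) ≤ uSeq b K n := by
  intro n
  induction n with
  | zero => simp [uSeq, zc]
  | succ n ih =>
    have hpow : (0:ℝ) < (2:ℝ)^((zc b n : ℝ)) := Real.rpow_pos_of_pos two_pos _
    rw [Finset.sum_range_succ]
    unfold uSeq
    rcases eq_or_ne (b n) 0 with h | h
    · rw [if_pos h]
      have hz : zc b (n+1) = zc b n + 1 := by rw [zc_succ, if_pos h]
      rw [hz]
      push_cast
      rw [Real.rpow_add two_pos, Real.rpow_one]
      nlinarith [Real.rpow_nonneg (le_of_lt two_pos) (-(zc b n : ℝ)), ih, hpow]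
    · rw [if_neg h]
      have hz : zc b (n+1) = zc b n := by rw [zc_succ, if_neg h]; ring
      rw [hz]
      have : (2:ℝ)^((zc b n : ℝ)) * (2:ℝ)^(-(zc b n : ℝ)) = 1 := by
        rw [← Real.rpow_add two_pos]; simp
      nlinarith [ih]

private lemma mgf_ind {Ω : Type} [MeasurableSpace Ω] {P : Measure Ω} [IsProbabilityMeasure P]
    {BB : Ω → ℕ} (hm : Measurable BB) (hP : P {ω | BB ω = 1} = 1/2) (t : ℝ) :
    mgf ((fun k => if k = 1 then (1:ℝ) else 0) ∘ BB) P t = (1 + Real.exp t)/2 ∧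
    Integrable (fun ω => Real.exp (t * ((fun k => if k = 1 then (1:ℝ) else 0) ∘ BB) ω)) P := by
  have hAm : MeasurableSet {ω | BB ω = 1} := hm (measurableSet_singleton 1)
  have key : (fun ω => Real.exp (t * ((fun k => if k = 1 then (1:ℝ) else 0) ∘ BB) ω))
      = fun ω => Set.indicator {ω | BB ω = 1} (fun _ => Real.exp t - 1) ω + 1 := by
    funext ω
    by_cases h : BB ω = 1
    · have hmem : ω ∈ {ω | BB ω = 1} := h
      simp [Function.comp, h, Set.indicator_of_mem hmem]
    · have hmem : ω ∉ {ω | BB ω = 1} := h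
      simp [Function.comp, h, Set.indicator_of_notMem hmem]
  have hint : Integrable (fun ω => Real.exp (t * ((fun k => if k = 1 then (1:ℝ) else 0) ∘ BB) ω)) P := by
    rw [key]
    exact ((integrable_const _).indicator hAm).add (integrable_const 1)
  refine ⟨?_, hint⟩
  have h2 : ((1:ℝ≥0∞)/2).toReal = 1/2 := by simp
  rw [mgf, key, integral_add ((integrable_const _).indicator hAm) (integrable_const 1),
    integral_indicator_const _ hAm, integral_const, measureReal_def, measureReal_def, hP]
  simp only [measure_univ, ENNReal.toReal_one, smul_eq_mul, one_mul, h2]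
  ring

set_option maxHeartbeats 1000000 in
theorem stmt_14 (κ : ℝ) (hκ : 1 < κ) (β : ℝ) (hβ0 : 0 < β) (hβ : β < 1 / 2)
    (δ : ℝ) (hδ : 0 < δ) :
    ∃ η > (0 : ℝ), ∃ n₀ : ℕ,
      ∀ (Ω : Type) (_ : MeasurableSpace Ω) (P : Measure Ω), IsProbabilityMeasure P →
      ∀ (B : ℕ → Ω → ℕ) (Z : ℕ → Ω → ℝ),
        (∀ n, Measurable (B n)) →
        (∀ n ω, B n ω = 0 ∨ B n ω = 1) →
        iIndepFun B P →
        (∀ n, P {ω | B n ω = 0} = 1 / 2) →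
        (∀ n, P {ω | B n ω = 1} = 1 / 2) →
        (∀ n, Measurable (Z n)) →
        (∀ n ω, Z n ω ∈ Set.Icc (0 : ℝ) 1) →
        (∀ᵐ ω ∂P, Z 0 ω ≤ η ∧
          ∀ n, (B n ω = 0 → Z (n + 1) ω ≤ κ * Z n ω ^ 2) ∧
               (B n ω = 1 → Z (n + 1) ω ≤ κ * Z n ω)) →
        1 - δ ≤
          (P {ω | ∀ n, n₀ ≤ n → Z n ω ≤ (2 : ℝ) ^ (-(2 : ℝ) ^ ((n : ℝ) * β))}).toReal := by
  classical
  have hκ0 : (0:ℝ) < κ := lt_trans one_pos hκ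
  have hlogκ : 0 < Real.log κ := Real.log_pos hκ
  set ε : ℝ := (1 - 2*β)/4 with hεdef
  have hε : 0 < ε := by rw [hεdef]; linarith
  set θ : ℝ := 1/2 - ε with hθdef
  have hθβε : θ = β + ε := by rw [hθdef, hεdef]; ring
  have hθ0 : 0 < θ := by rw [hθβε]; linarith
  have hθ1 : θ ≤ 1 := by rw [hθdef]; linarith
  set t : ℝ := Real.log (1+ε) with htdef
  have ht0 : 0 ≤ t := Real.log_nonneg (by linarith)
  set r : ℝ := Real.exp (-(t*(1/2+ε))) * (1+ε/2) with hrdef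
  have hr0 : 0 < r := mul_pos (Real.exp_pos _) (by linarith)
  have hr1 : r < 1 := by
    have h1 : Real.log (1+ε/2) ≤ ε/2 := by
      have := Real.log_le_sub_one_of_pos (show (0:ℝ) < 1+ε/2 by linarith)
      linarith
    have h2 : ε/(1+ε) ≤ Real.log (1+ε) := by
      have h := Real.log_le_sub_one_of_pos (show (0:ℝ) < (1+ε)⁻¹ by positivity)
      rw [Real.log_inv] at h
      have h1ε : (0:ℝ) < 1+ε := by linarith
      have heq : 1 - (1+ε)⁻¹ = ε/(1+ε) := by field_simp; ring
      linarith [heq ▸ (by linarith : 1 - (1+ε)⁻¹ ≤ Real.log (1+ε))]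
    have hlog : ε/2 < (1/2+ε) * (ε/(1+ε)) := by
      have hma : (1/2+ε) * (ε/(1+ε)) = ((1/2+ε)*ε)/(1+ε) := (mul_div_assoc _ _ _).symm
      rw [hma, lt_div_iff₀ (by linarith : (0:ℝ) < 1+ε)]
      nlinarith
    have hkey : Real.log (1+ε/2) < t*(1/2+ε) := by
      have h3 : (1/2+ε) * (ε/(1+ε)) ≤ (1/2+ε) * t :=
        mul_le_mul_of_nonneg_left h2 (by linarith)
      calc Real.log (1+ε/2) ≤ ε/2 := h1
        _ < (1/2+ε) * (ε/(1+ε)) := hlog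
        _ ≤ (1/2+ε) * t := h3
        _ = t*(1/2+ε) := mul_comm _ _
    have hre : (1:ℝ)+ε/2 = Real.exp (Real.log (1+ε/2)) := (Real.exp_log (by linarith)).symm
    rw [hrdef, hre, ← Real.exp_add]
    calc Real.exp (-(t*(1/2+ε)) + Real.log (1+ε/2)) < Real.exp 0 :=
          Real.exp_lt_exp.2 (by linarith)
      _ = 1 := Real.exp_zero
  have h1r : (0:ℝ) < 1 - r := by linarith
  obtain ⟨J, hJ'⟩ := exists_pow_lt_of_lt_one (mul_pos hδ h1r) hr1
  have hJ : r^(J+1) * (1-r)⁻¹ ≤ δ := by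
    have h1 : r^(J+1) ≤ r^J :=
      pow_le_pow_of_le_one hr0.le hr1.le (Nat.le_succ J)
    have h2 : r^(J+1) ≤ δ * (1-r) := le_trans h1 hJ'.le
    rw [← div_eq_mul_inv, div_le_iff₀ h1r]
    exact h2
  set C₂ : ℝ := (2:ℝ)^(J:ℝ) / (1 - (2:ℝ)^(-θ)) with hC2def
  set K : ℝ := C₂ + 1 with hKdef
  set c' : ℝ := Real.log 2 / Real.log κ with hc'def
  have hc' : 0 < c' := div_pos (Real.log_pos one_lt_two) hlogκ
  refine ⟨κ ^ (-(K+1)), Real.rpow_pos_of_pos hκ0 _,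
    ⌈((J:ℝ) + |Real.logb 2 c'|)/ε⌉₊, ?_⟩
  intro Ω mΩ P hPprob B Z hBmeas hb01 hInd hB0 hB1 hZmeas hZmem hae
  set n₀ : ℕ := ⌈((J:ℝ) + |Real.logb 2 c'|)/ε⌉₊ with hn₀def
  set g : ℕ → ℝ := fun k => if k = 1 then (1:ℝ) else 0 with hgdef
  have hg : Measurable g := measurable_from_top
  set X : ℕ → Ω → ℝ := fun i => g ∘ B i with hXdef
  have hXmeas : ∀ i, Measurable (X i) := fun i => hg.comp (hBmeas i)
  have hXindep : iIndepFun X P := hInd.comp (fun _ => g) (fun _ => hg)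
  have hmgf : ∀ i, mgf (X i) P t = (1+Real.exp t)/2 := fun i => (mgf_ind (hBmeas i) (hB1 i) t).1
  have hXint : ∀ i, Integrable (fun ω => Real.exp (t * X i ω)) P :=
    fun i => (mgf_ind (hBmeas i) (hB1 i) t).2
  have hexp_t : Real.exp t = 1 + ε := Real.exp_log (by linarith)
  set E : ℕ → Set Ω := fun j => {ω | (1/2+ε)*(j:ℝ) ≤ (∑ i ∈ Finset.range j, X i) ω} with hEdef
  have hsum_meas : ∀ j : ℕ, Measurable (∑ i ∈ Finset.range j, X i) := by
    intro j
    have h : (∑ i ∈ Finset.range j, X i) = fun ω => ∑ i ∈ Finset.range j, X i ω := by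
      funext ω; simp
    rw [h]; exact Finset.measurable_sum _ (fun i _ => hXmeas i)
  have hEmeas : ∀ j, MeasurableSet (E j) := fun j =>
    measurableSet_le measurable_const (hsum_meas j)
  have hcher : ∀ j : ℕ, (P (E j)).toReal ≤ r ^ j := by
    intro j
    have h := measure_ge_le_exp_mul_mgf (μ := P) (X := ∑ i ∈ Finset.range j, X i)
      ((1/2+ε)*(j:ℝ)) ht0 (hXindep.integrable_exp_mul_sum hXmeas (fun i _ => hXint i))
    rw [hXindep.mgf_sum hXmeas] at h
    refine le_trans h ?_
    rw [Finset.prod_congr rfl (fun i _ => hmgf i), Finset.prod_const, Finset.card_range, hexp_t]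
    have h1 : ((1:ℝ)+(1+ε))/2 = 1+ε/2 := by ring
    have h2 : -t * ((1/2+ε)*(j:ℝ)) = (j:ℕ) * (-(t*(1/2+ε))) := by push_cast; ring
    rw [h1, h2, Real.exp_nat_mul, ← mul_pow]
  set Bad : Set Ω := ⋃ k : ℕ, E (J+1+k) with hBaddef
  have hBadMeas : MeasurableSet Bad := MeasurableSet.iUnion (fun k => hEmeas _)
  have hsumm : Summable (fun k : ℕ => r^(J+1+k)) := by
    have h : (fun k : ℕ => r^(J+1+k)) = fun k => r^(J+1) * r^k := funext fun k => pow_add r (J+1) k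
    rw [h]
    exact (summable_geometric_of_lt_one hr0.le hr1).mul_left _
  have hPBad : P Bad ≤ ENNReal.ofReal δ := by
    calc P Bad ≤ ∑' k, P (E (J+1+k)) := measure_iUnion_le _
      _ ≤ ∑' k : ℕ, ENNReal.ofReal (r^(J+1+k)) := ENNReal.tsum_le_tsum (fun k =>
          (ENNReal.le_ofReal_iff_toReal_le (measure_ne_top P _) (by positivity)).2 (hcher _))
      _ = ENNReal.ofReal (∑' k : ℕ, r^(J+1+k)) := (ENNReal.ofReal_tsum_of_nonneg
          (fun k => by positivity) hsumm).symm
      _ ≤ ENNReal.ofReal δ := by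
          apply ENNReal.ofReal_le_ofReal
          have h : (fun k : ℕ => r^(J+1+k)) = fun k => r^(J+1) * r^k :=
            funext fun k => pow_add r (J+1) k
          calc (∑' k : ℕ, r^(J+1+k)) = r^(J+1) * (1-r)⁻¹ := by
                rw [h, tsum_mul_left, tsum_geometric_of_lt_one hr0.le hr1]
            _ ≤ δ := hJ
  have hpath : ∀ ω, (Z 0 ω ≤ κ^(-(K+1)) ∧
      ∀ n, (B n ω = 0 → Z (n+1) ω ≤ κ * Z n ω^2) ∧ (B n ω = 1 → Z (n+1) ω ≤ κ * Z n ω)) →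
      ω ∉ Bad → ∀ n : ℕ, n₀ ≤ n → Z n ω ≤ (2:ℝ)^(-(2:ℝ)^((n:ℝ)*β)) := by
    intro ω hΦ hBadω n hn
    set b : ℕ → ℕ := fun i => B i ω with hbdef
    have hbs : ∀ i, b i = 0 ∨ b i = 1 := fun i => hb01 i ω
    have hZ0ω : ∀ m, 0 ≤ Z m ω := fun m => (hZmem m ω).1
    have hu := aux_Z_le κ hκ b (fun m => Z m ω) K hZ0ω hΦ.1 (fun m => hΦ.2 m) hbs
    have hcount : ∀ j : ℕ, ((zc b j : ℝ)) + (∑ i ∈ Finset.range j, X i) ω = j := by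
      intro j
      have hXap : (∑ i ∈ Finset.range j, X i) ω
          = ∑ i ∈ Finset.range j, (if b i = 1 then (1:ℝ) else 0) := by
        rw [Finset.sum_apply]
        exact Finset.sum_congr rfl (fun i _ => rfl)
      rw [hXap, Finset.sum_boole]
      have hfc : (Finset.range j).filter (fun i => b i = 1)
          = (Finset.range j).filter (fun i => ¬ b i = 0) := by
        apply Finset.filter_congr
        intro i _
        rcases hbs i with h|h <;> simp [h]
      rw [hfc]
      have hnat : zc b j + ((Finset.range j).filter (fun i => ¬ b i = 0)).card = j := by
        have h := Finset.card_filter_add_card_filter_not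
          (s := Finset.range j) (p := fun i => b i = 0)
        simpa [zc] using h
      exact_mod_cast hnat
    have hS : ∀ j : ℕ, θ*(j:ℝ) - J ≤ (zc b j : ℝ) := by
      intro j
      rcases le_or_gt j J with hj | hj
      · have h1 : θ*(j:ℝ) ≤ (J:ℝ) := by
          calc θ*(j:ℝ) ≤ 1*(j:ℝ) := mul_le_mul_of_nonneg_right hθ1 (Nat.cast_nonneg _)
            _ = (j:ℝ) := one_mul _
            _ ≤ (J:ℝ) := by exact_mod_cast hj
        have h2 : (0:ℝ) ≤ (zc b j : ℝ) := Nat.cast_nonneg _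
        linarith
      · obtain ⟨k, rfl⟩ : ∃ k : ℕ, j = J+1+k := ⟨j - (J+1), by omega⟩
        have hnotE : ω ∉ E (J+1+k) := fun hmem => hBadω (Set.mem_iUnion.2 ⟨k, hmem⟩)
        have hlt : (∑ i ∈ Finset.range (J+1+k), X i) ω < (1/2+ε)*(((J+1+k : ℕ)):ℝ) :=
          lt_of_not_ge (fun hle => hnotE hle)
        have hcid := hcount (J+1+k)
        have hJ0 : (0:ℝ) ≤ (J:ℝ) := Nat.cast_nonneg _
        have hcast : (((J+1+k : ℕ)):ℝ) = (J:ℝ)+1+(k:ℝ) := by push_cast; ring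
        rw [hθdef]
        rw [hcast] at hlt hcid ⊢
        linarith [hlt, hcid, hJ0]
    have hx01 : (0:ℝ) ≤ (2:ℝ)^(-θ) := Real.rpow_nonneg (by norm_num) _
    have hx1 : (2:ℝ)^(-θ) < 1 := Real.rpow_lt_one_of_one_lt_of_neg one_lt_two (by linarith)
    have hG : ∀ m : ℕ, (∑ j ∈ Finset.range m, (2:ℝ)^(-(zc b j:ℝ))) ≤ C₂ := by
      intro m
      have hterm : ∀ j ∈ Finset.range m,
          (2:ℝ)^(-(zc b j:ℝ)) ≤ (2:ℝ)^(J:ℝ) * ((2:ℝ)^(-θ))^j := by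
        intro j _
        have h1 : (2:ℝ)^(-(zc b j:ℝ)) ≤ (2:ℝ)^((J:ℝ) - θ*j) := by
          apply Real.rpow_le_rpow_of_exponent_le one_le_two
          linarith [hS j]
        have h2 : (2:ℝ)^((J:ℝ) - θ*(j:ℝ)) = (2:ℝ)^(J:ℝ) * ((2:ℝ)^(-θ))^j := by
          rw [sub_eq_add_neg, Real.rpow_add two_pos]
          congr 1
          rw [← Real.rpow_natCast ((2:ℝ)^(-θ)) j, ← Real.rpow_mul (by norm_num : (0:ℝ) ≤ 2)]
          congr 1; ring
        exact h2 ▸ h1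
      calc (∑ j ∈ Finset.range m, (2:ℝ)^(-(zc b j:ℝ)))
          ≤ ∑ j ∈ Finset.range m, (2:ℝ)^(J:ℝ) * ((2:ℝ)^(-θ))^j := Finset.sum_le_sum hterm
        _ = (2:ℝ)^(J:ℝ) * ∑ j ∈ Finset.range m, ((2:ℝ)^(-θ))^j := by rw [Finset.mul_sum]
        _ ≤ (2:ℝ)^(J:ℝ) * (1 - (2:ℝ)^(-θ))⁻¹ := by
            apply mul_le_mul_of_nonneg_left _ (Real.rpow_nonneg (by norm_num) _)
            calc (∑ j ∈ Finset.range m, ((2:ℝ)^(-θ))^j)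
                ≤ ∑' j : ℕ, ((2:ℝ)^(-θ))^j := (summable_geometric_of_lt_one hx01 hx1).sum_le_tsum _ (fun j _ => pow_nonneg hx01 j)
              _ = (1 - (2:ℝ)^(-θ))⁻¹ := tsum_geometric_of_lt_one hx01 hx1
        _ = C₂ := by rw [hC2def, div_eq_mul_inv]
    have huge : ∀ m : ℕ, (2:ℝ)^((zc b m : ℝ)) ≤ uSeq b K m := by
      intro m
      have h1 := aux_u_ge b K m
      have h2 : (2:ℝ)^((zc b m:ℝ)) * 1
          ≤ (2:ℝ)^((zc b m:ℝ)) * (K - ∑ j ∈ Finset.range m, (2:ℝ)^(-(zc b j:ℝ))) := by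
        apply mul_le_mul_of_nonneg_left _ (Real.rpow_nonneg (by norm_num) _)
        have h3 := hG m
        rw [hKdef]
        linarith
      rw [mul_one] at h2
      linarith
    have hfin1 : Z n ω ≤ κ ^ (-((2:ℝ)^(θ*(n:ℝ) - (J:ℝ)))) := by
      refine le_trans (hu n) ?_
      apply Real.rpow_le_rpow_of_exponent_le hκ.le
      have h1 : (2:ℝ)^(θ*(n:ℝ) - (J:ℝ)) ≤ (2:ℝ)^((zc b n:ℝ)) :=
        Real.rpow_le_rpow_of_exponent_le one_le_two (hS n)
      have h2 := huge n
      linarith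
    refine le_trans hfin1 ?_
    have hn' : (J:ℝ) + |Real.logb 2 c'| ≤ ε * n := by
      have hA : ((J:ℝ) + |Real.logb 2 c'|)/ε ≤ (n:ℝ) := by
        calc ((J:ℝ) + |Real.logb 2 c'|)/ε ≤ (n₀:ℝ) := by
              rw [hn₀def]; exact Nat.le_ceil _
          _ ≤ (n:ℝ) := by exact_mod_cast hn
      rw [div_le_iff₀ hε] at hA
      linarith
    have hcle : c' ≤ (2:ℝ)^(ε*(n:ℝ) - (J:ℝ)) := by
      have h1 : Real.logb 2 c' ≤ ε*(n:ℝ) - (J:ℝ) := by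
        have h2 := le_abs_self (Real.logb 2 c')
        linarith
      calc c' = (2:ℝ)^(Real.logb 2 c') := (Real.rpow_logb two_pos (by norm_num) hc').symm
        _ ≤ (2:ℝ)^(ε*(n:ℝ) - (J:ℝ)) := Real.rpow_le_rpow_of_exponent_le one_le_two h1
    have hL : κ ^ (-((2:ℝ)^(θ*(n:ℝ)-(J:ℝ))))
        = Real.exp (Real.log κ * (-((2:ℝ)^(θ*(n:ℝ)-(J:ℝ))))) := Real.rpow_def_of_pos hκ0 _
    have hR : (2:ℝ) ^ (-(2:ℝ)^((n:ℝ)*β))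
        = Real.exp (Real.log 2 * (-(2:ℝ)^((n:ℝ)*β))) := Real.rpow_def_of_pos two_pos _
    rw [hL, hR]
    apply Real.exp_le_exp.2
    have hsplit : (2:ℝ)^(θ*(n:ℝ) - (J:ℝ)) = (2:ℝ)^((n:ℝ)*β) * (2:ℝ)^(ε*(n:ℝ) - (J:ℝ)) := by
      rw [← Real.rpow_add two_pos]
      congr 1
      rw [hθβε]; ring
    have hb0 : (0:ℝ) ≤ (2:ℝ)^((n:ℝ)*β) := Real.rpow_nonneg (by norm_num) _
    have hkey : Real.log 2 ≤ Real.log κ * (2:ℝ)^(ε*(n:ℝ)-(J:ℝ)) := by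
      rw [hc'def] at hcle
      rw [div_le_iff₀ hlogκ] at hcle
      linarith [hcle]
    rw [hsplit]
    nlinarith [mul_le_mul_of_nonneg_left hkey hb0]
  set target : Set Ω := {ω | ∀ n, n₀ ≤ n → Z n ω ≤ (2:ℝ)^(-(2:ℝ)^((n:ℝ)*β))} with htargetdef
  have htm : MeasurableSet target := by
    have h : target = ⋂ n : ℕ, ⋂ _ : n₀ ≤ n, {ω | Z n ω ≤ (2:ℝ)^(-(2:ℝ)^((n:ℝ)*β))} := by
      ext ω; simp [htargetdef, Set.mem_iInter, Set.mem_setOf_eq]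
    rw [h]
    exact MeasurableSet.iInter fun n => MeasurableSet.iInter fun _ =>
      measurableSet_le (hZmeas n) measurable_const
  have hnull : P {ω | ¬ (Z 0 ω ≤ κ^(-(K+1)) ∧
      ∀ n, (B n ω = 0 → Z (n+1) ω ≤ κ * Z n ω^2) ∧ (B n ω = 1 → Z (n+1) ω ≤ κ * Z n ω))} = 0 :=
    ae_iff.mp hae
  have hsub : targetᶜ ⊆ {ω | ¬ (Z 0 ω ≤ κ^(-(K+1)) ∧
      ∀ n, (B n ω = 0 → Z (n+1) ω ≤ κ * Z n ω^2) ∧ (B n ω = 1 → Z (n+1) ω ≤ κ * Z n ω))} ∪ Bad := by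
    intro ω hω
    by_cases hbd : ω ∈ Bad
    · exact Or.inr hbd
    by_cases hp : (Z 0 ω ≤ κ^(-(K+1)) ∧
      ∀ n, (B n ω = 0 → Z (n+1) ω ≤ κ * Z n ω^2) ∧ (B n ω = 1 → Z (n+1) ω ≤ κ * Z n ω))
    · exact absurd (show ω ∈ target from hpath ω hp hbd) hω
    · exact Or.inl hp
  have hPc : P targetᶜ ≤ ENNReal.ofReal δ :=
    le_trans (measure_mono hsub)
      (le_trans (measure_union_le _ _) (by rw [hnull, zero_add]; exact hPBad))
  have h1t : 1 - ENNReal.ofReal δ ≤ P target := by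
    have hc : P targetᶜ = 1 - P target := prob_compl_eq_one_sub htm
    rw [hc] at hPc
    have h' := tsub_le_iff_right.mp hPc
    exact tsub_le_iff_right.mpr (by rwa [add_comm] at h')
  rcases le_or_gt 1 δ with hδ1 | hδ1
  · have h0 : (0:ℝ) ≤ (P target).toReal := ENNReal.toReal_nonneg
    linarith
  · have hmono := ENNReal.toReal_mono (measure_ne_top P target) h1t
    have heq : ((1:ℝ≥0∞) - ENNReal.ofReal δ).toReal = 1 - δ := by
      rw [ENNReal.toReal_sub_of_le (ENNReal.ofReal_le_one.2 hδ1.le) (by simp)]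
      simp [ENNReal.toReal_ofReal hδ.le]
    rw [heq] at hmono
    exact hmono
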